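/- arXiv:1710.04107 — 3 statements merged into one kernel-verified Lean document; each statement's English description precedes it below -/
import Mathlib

section
/- For n ≥ 0 let p_n ∈ ℤ[X] be the polynomial whose coefficient of X^m is the number of permutations of size m that avoid both 312 and 321 and whose longest increasing subsequence has length exactly n (this is a polynomial since such a permutation has size at most 2n). Then p_0 = 1, p_1 = X + X², and for all n ≥ 2, p_n = (2X + X²)·p_{n−1} − X²·p_{n−2}. -/
set_option linter.unusedVariables false

/-- `l` is the one-line notation of a permutation of `{1, …, l.length}`. -/
def IsPermList (l : List ℕ) : Prop :=
  l.Perm ((List.range l.length).map (· + 1))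

/-- `Involves σ τ` means the permutation (in one-line notation) `σ` is involved in `τ`
(written σ ≼ τ): there is a strictly increasing map of positions matching relative order. -/
def Involves (σ τ : List ℕ) : Prop :=
  ∃ f : Fin σ.length → Fin τ.length, StrictMono f ∧
    ∀ i j : Fin σ.length, σ.get i < σ.get j ↔ τ.get (f i) < τ.get (f j)

/-- Direct sum `σ ⊕ τ` of permutations in one-line notation. -/
def dsum (σ τ : List ℕ) : List ℕ := σ ++ τ.map (· + σ.length)

/-- `ι_n = 1 2 ⋯ n`, the increasing permutation of size `n`. -/
def iota (n : ℕ) : List ℕ := (List.range n).map (· + 1)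

namespace LisAux

/-- no position has two smaller entries after it -/
def OKl (l : List ℕ) : Prop :=
  ∀ i j k : ℕ, i < j → j < k → k < l.length →
    l.getD j 0 < l.getD i 0 → l.getD k 0 < l.getD i 0 → False

/-- `l` has an increasing subsequence of length `k` -/
def HasInc (l : List ℕ) (k : ℕ) : Prop :=
  ∃ f : Fin k → Fin l.length, StrictMono f ∧ StrictMono fun i => l.get (f i)

/-- descent set -/
def desF (l : List ℕ) : Finset ℕ :=
  (Finset.range (l.length - 1)).filter fun i => l.getD (i+1) 0 < l.getD i 0

def desn (l : List ℕ) : ℕ := (desF l).card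

lemma getD_eq_get (l : List ℕ) {i : ℕ} (h : i < l.length) :
    l.getD i 0 = l.get ⟨i, h⟩ := by
  rw [List.getD_eq_getElem _ _ h]; rfl

lemma length_iota (k : ℕ) : (iota k).length = k := by simp [iota]

lemma get_iota (k : ℕ) (i : Fin (iota k).length) : (iota k).get i = (i : ℕ) + 1 := by
  simp only [List.get_eq_getElem]; simp [iota]

lemma mem_iota {x k : ℕ} : x ∈ iota k ↔ 1 ≤ x ∧ x ≤ k := by
  simp only [iota, List.mem_map, List.mem_range]
  constructor
  · rintro ⟨y, hy, rfl⟩; omega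
  · rintro ⟨h1, h2⟩; exact ⟨x - 1, by omega, by omega⟩

lemma nodup_iota (k : ℕ) : (iota k).Nodup :=
  (List.nodup_range : (List.range k).Nodup).map (fun a b h => by omega)

lemma iota_succ (k : ℕ) : iota (k+1) = iota k ++ [k+1] := by
  simp [iota, List.range_succ]

lemma involves_iota_iff (l : List ℕ) (k : ℕ) : Involves (iota k) l ↔ HasInc l k := by
  constructor
  · rintro ⟨f, hf, hiff⟩
    refine ⟨fun i => f (Fin.cast (length_iota k).symm i), fun a b hab => hf hab,
      fun a b hab => ?_⟩
    have := (hiff (Fin.cast (length_iota k).symm a) (Fin.cast (length_iota k).symm b)).mp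
    simp only [get_iota] at this
    exact this (by simpa using (show (a:ℕ) < b from hab))
  · rintro ⟨f, hf, hvals⟩
    refine ⟨fun i => f (Fin.cast (length_iota k) i), fun a b hab => hf hab, fun a b => ?_⟩
    simp only [get_iota]
    constructor
    · intro h
      exact hvals (show ((Fin.cast (length_iota k) a) : ℕ) < Fin.cast (length_iota k) b by
        simpa using h)
    · intro h
      have := hvals.lt_iff_lt.mp h
      simpa using (show ((Fin.cast (length_iota k) a) : ℕ) < Fin.cast (length_iota k) b from this)

lemma hasInc_mono {l : List ℕ} {k j : ℕ} (h : HasInc l k) (hjk : j ≤ k) : HasInc l j := by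
  obtain ⟨f, hf, hv⟩ := h
  exact ⟨fun i => f (Fin.castLE hjk i), fun a b hab => hf hab, fun a b hab => hv hab⟩

lemma desn_le (l : List ℕ) : desn l ≤ l.length - 1 := by
  have h2 := Finset.card_filter_le (Finset.range (l.length - 1))
    (fun i => l.getD (i+1) 0 < l.getD i 0)
  simpa [desn, desF] using h2

end LisAux
namespace LisAux

lemma okl_not_involves_312 {l : List ℕ} (hok : OKl l) : ¬ Involves [3,1,2] l := by
  rintro ⟨f, hf, hiff⟩
  have l3 : [3,1,2].length = 3 := rfl
  let i0 : Fin ([3,1,2].length) := ⟨0, by simp⟩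
  let i1 : Fin ([3,1,2].length) := ⟨1, by simp⟩
  let i2 : Fin ([3,1,2].length) := ⟨2, by simp⟩
  have h01 : f i0 < f i1 := hf (by simp [i0, i1, Fin.lt_def])
  have h12 : f i1 < f i2 := hf (by simp [i1, i2, Fin.lt_def])
  have hv1 : l.get (f i1) < l.get (f i0) := (hiff i1 i0).mp (by simp [i0, i1])
  have hv2 : l.get (f i2) < l.get (f i0) := (hiff i2 i0).mp (by simp [i0, i2])
  refine hok (f i0) (f i1) (f i2) h01 h12 (f i2).2 ?_ ?_
  · rw [getD_eq_get l (f i1).2, getD_eq_get l (f i0).2]; exact hv1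
  · rw [getD_eq_get l (f i2).2, getD_eq_get l (f i0).2]; exact hv2

lemma okl_not_involves_321 {l : List ℕ} (hok : OKl l) : ¬ Involves [3,2,1] l := by
  rintro ⟨f, hf, hiff⟩
  let i0 : Fin ([3,2,1].length) := ⟨0, by simp⟩
  let i1 : Fin ([3,2,1].length) := ⟨1, by simp⟩
  let i2 : Fin ([3,2,1].length) := ⟨2, by simp⟩
  have h01 : f i0 < f i1 := hf (by simp [i0, i1, Fin.lt_def])
  have h12 : f i1 < f i2 := hf (by simp [i1, i2, Fin.lt_def])
  have hv1 : l.get (f i1) < l.get (f i0) := (hiff i1 i0).mp (by simp [i0, i1])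
  have hv2 : l.get (f i2) < l.get (f i0) := (hiff i2 i0).mp (by simp [i0, i2])
  refine hok (f i0) (f i1) (f i2) h01 h12 (f i2).2 ?_ ?_
  · rw [getD_eq_get l (f i1).2, getD_eq_get l (f i0).2]; exact hv1
  · rw [getD_eq_get l (f i2).2, getD_eq_get l (f i0).2]; exact hv2

lemma involves_of_triple {l : List ℕ} (hnd : l.Nodup) {i j k : ℕ} (h1 : i < j) (h2 : j < k)
    (h3 : k < l.length) (hji : l.getD j 0 < l.getD i 0) (hki : l.getD k 0 < l.getD i 0) :
    Involves [3,1,2] l ∨ Involves [3,2,1] l := by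
  have hi : i < l.length := by omega
  have hj : j < l.length := by omega
  rw [List.getD_eq_getElem _ _ hj, List.getD_eq_getElem _ _ hi] at hji
  rw [List.getD_eq_getElem _ _ h3, List.getD_eq_getElem _ _ hi] at hki
  have hne : l[j] ≠ l[k] := fun h => by
    have h2' := (List.Nodup.getElem_inj_iff hnd).mp h
    omega
  rcases lt_or_gt_of_ne hne with hjk | hkj
  · left
    refine ⟨![⟨i,hi⟩,⟨j,hj⟩,⟨k,h3⟩], ?_, ?_⟩
    · intro a b hab
      fin_cases a <;> fin_cases b <;>
        simp_all [Fin.lt_def] <;> omega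
    · intro a b
      fin_cases a <;> fin_cases b <;> simp [List.get] <;> omega
  · right
    refine ⟨![⟨i,hi⟩,⟨j,hj⟩,⟨k,h3⟩], ?_, ?_⟩
    · intro a b hab
      fin_cases a <;> fin_cases b <;>
        simp_all [Fin.lt_def] <;> omega
    · intro a b
      fin_cases a <;> fin_cases b <;> simp [List.get] <;> omega

section PermFacts
variable {l : List ℕ} {m : ℕ}

lemma nodup_of_perm (h : l.Perm (iota m)) : l.Nodup := h.nodup_iff.mpr (nodup_iota m)

lemma getD_mem (l : List ℕ) {i : ℕ} (h : i < l.length) : l.getD i 0 ∈ l := by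
  rw [List.getD_eq_getElem _ _ h]; exact List.getElem_mem h

lemma val_bounds (h : l.Perm (iota m)) {i : ℕ} (hi : i < l.length) :
    1 ≤ l.getD i 0 ∧ l.getD i 0 ≤ m := mem_iota.mp (h.mem_iff.mp (getD_mem l hi))

lemma getD_inj (hnd : l.Nodup) {i j : ℕ} (hi : i < l.length) (hj : j < l.length)
    (h : l.getD i 0 = l.getD j 0) : i = j := by
  rw [List.getD_eq_getElem _ _ hi, List.getD_eq_getElem _ _ hj] at h
  exact (List.Nodup.getElem_inj_iff hnd).mp h

lemma top_at_penult (hlen : l.length = m) (hm : 2 ≤ m) (hperm : l.Perm (iota m))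
    (hok : OKl l) (hlast : l.getD (m-1) 0 ≠ m) : l.getD (m-2) 0 = m := by
  have hnd := nodup_of_perm hperm
  have hmem : m ∈ l := hperm.mem_iff.mpr (mem_iota.mpr ⟨by omega, le_rfl⟩)
  obtain ⟨p, hp, hpv⟩ := List.mem_iff_getElem.mp hmem
  have hpv' : l.getD p 0 = m := by rw [List.getD_eq_getElem _ _ hp]; exact hpv
  by_contra hne
  have hp1 : p ≠ m - 1 := fun h => hlast (h ▸ hpv')
  have hp2 : p ≠ m - 2 := fun h => hne (h ▸ hpv')
  have hplt : p + 2 < m := by omega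
  have hv1 : l.getD (p+1) 0 < m := by
    have hb := (val_bounds hperm (show p+1 < l.length by omega)).2
    rcases lt_or_eq_of_le hb with h | h
    · exact h
    · exact absurd (getD_inj hnd (by omega) hp (h.trans hpv'.symm)) (by omega)
  have hv2 : l.getD (p+2) 0 < m := by
    have hb := (val_bounds hperm (show p+2 < l.length by omega)).2
    rcases lt_or_eq_of_le hb with h | h
    · exact h
    · exact absurd (getD_inj hnd (by omega) hp (h.trans hpv'.symm)) (by omega)
  exact hok p (p+1) (p+2) (by omega) (by omega) (by omega)
    (by rw [hpv']; exact hv1) (by rw [hpv']; exact hv2)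

end PermFacts
end LisAux
namespace LisAux

lemma mem_desF {l : List ℕ} {d : ℕ} :
    d ∈ desF l ↔ d < l.length - 1 ∧ l.getD (d+1) 0 < l.getD d 0 := by
  simp [desF]

lemma hasInc_of_okl {l : List ℕ} (hnd : l.Nodup) (hok : OKl l) :
    HasInc l (l.length - desn l) := by
  classical
  set m := l.length with hm
  set B := (desF l).image (· + 1) with hB
  have hBsub : B ⊆ Finset.range m := by
    intro x hx
    simp only [hB, Finset.mem_image] at hx
    obtain ⟨d, hd, rfl⟩ := hx
    have hd' := (mem_desF.mp hd).1
    simp only [Finset.mem_range]; omega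
  have hBcard : B.card = desn l := Finset.card_image_of_injective _ (fun a b h => by omega)
  set T := Finset.range m \ B with hT
  have hTcard : T.card = m - desn l := by
    rw [hT, Finset.card_sdiff_of_subset hBsub, Finset.card_range, hBcard]
  let e := T.orderIsoOfFin hTcard
  have hemem : ∀ i, (e i : ℕ) < m ∧ (e i : ℕ) ∉ B := by
    intro i
    have h2 := Finset.mem_sdiff.mp (e i).2
    exact ⟨Finset.mem_range.mp h2.1, h2.2⟩
  refine ⟨fun i => ⟨(e i : ℕ), (hemem i).1⟩, ?_, ?_⟩
  · intro a b hab
    have : (e a : T) < e b := e.lt_iff_lt.mpr hab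
    exact Subtype.coe_lt_coe.mpr this
  · intro a b hab
    have hpab : (e a : ℕ) < (e b : ℕ) := Subtype.coe_lt_coe.mpr (e.lt_iff_lt.mpr hab)
    set pa := (e a : ℕ) with hpa
    set pb := (e b : ℕ) with hpb
    have hpbm : pb < m := (hemem b).1
    have hpam : pa < m := (hemem a).1
    have hstep : ¬ (l.getD pb 0 < l.getD (pb-1) 0) := by
      intro hlt
      have hmem : pb - 1 ∈ desF l := by
        rw [mem_desF]
        constructor
        · omega
        · have : pb - 1 + 1 = pb := by omega
          rw [this]; exact hlt
      exact (hemem b).2 (Finset.mem_image.mpr ⟨pb - 1, hmem, by omega⟩)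
    simp only []
    by_contra hcon
    have hge : l.getD pb 0 ≤ l.getD pa 0 := by
      rw [getD_eq_get l hpbm, getD_eq_get l hpam]
      exact le_of_not_gt hcon
    have hne : l.getD pb 0 ≠ l.getD pa 0 := fun h =>
      absurd (getD_inj hnd (by omega) (by omega) h) (by omega)
    have hlt : l.getD pb 0 < l.getD pa 0 := lt_of_le_of_ne hge hne
    rcases eq_or_lt_of_le (show pa ≤ pb - 1 by omega) with heq | hlt2
    · rw [← heq] at hstep
      exact hstep hlt
    · exact hok pa (pb-1) pb hlt2 (by omega) (by omega)
        (lt_of_le_of_lt (le_of_not_gt hstep) hlt) hlt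

lemma not_hasInc_succ {l : List ℕ} (hok : OKl l) : ¬ HasInc l (l.length - desn l + 1) := by
  classical
  rintro ⟨f, hf, hv⟩
  set F : Finset ℕ := Finset.image (fun i => ((f i) : ℕ)) Finset.univ with hFdef
  have hfinj : Function.Injective fun i => ((f i) : ℕ) := by
    intro a b hab
    exact hf.injective (Fin.val_injective hab)
  have hFcard : F.card = l.length - desn l + 1 := by
    rw [hFdef, Finset.card_image_of_injective _ hfinj, Finset.card_univ, Fintype.card_fin]
  have hFsub : F ⊆ Finset.range l.length := by
    intro x hx
    simp only [hFdef, Finset.mem_image, Finset.mem_univ, true_and] at hx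
    obtain ⟨i, rfl⟩ := hx
    simp only [Finset.mem_range]
    exact (f i).2
  have hFm : F.card ≤ l.length := by
    have := Finset.card_le_card hFsub
    simpa using this
  have hpair : ∀ d ∈ desF l, ¬(d ∈ F ∧ d + 1 ∈ F) := by
    rintro d hd ⟨hd1, hd2⟩
    simp only [hFdef, Finset.mem_image, Finset.mem_univ, true_and] at hd1 hd2
    obtain ⟨a, ha⟩ := hd1
    obtain ⟨b, hb⟩ := hd2
    have hab : a < b := hf.lt_iff_lt.mp (show f a < f b by
      rw [Fin.lt_def, ha, hb]; omega)
    have hval : l.getD d 0 < l.getD (d+1) 0 := by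
      rw [← hb, ← ha, getD_eq_get l (f a).2, getD_eq_get l (f b).2]
      exact hv hab
    have := (mem_desF.mp hd).2
    omega
  have hg : ∀ d ∈ desF l, (if d ∈ F then d+1 else d) ∈ Finset.range l.length \ F := by
    intro d hd
    have hdr := (mem_desF.mp hd).1
    by_cases h : d ∈ F
    · simp only [if_pos h, Finset.mem_sdiff, Finset.mem_range]
      exact ⟨by omega, fun hc => hpair d hd ⟨h, hc⟩⟩
    · simp only [if_neg h, Finset.mem_sdiff, Finset.mem_range]
      exact ⟨by omega, h⟩
  have hmono : ∀ d1 ∈ desF l, ∀ d2 ∈ desF l, d1 < d2 →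
      (if d1 ∈ F then d1+1 else d1) < (if d2 ∈ F then d2+1 else d2) := by
    intro d1 hd1 d2 hd2 hlt
    have hna : d2 ≠ d1 + 1 := by
      intro hadj
      have ha1 := (mem_desF.mp hd1).2
      have ha2 := (mem_desF.mp hd2).2
      have hb2 := (mem_desF.mp hd2).1
      rw [hadj] at ha2
      exact hok d1 (d1+1) (d1+2) (by omega) (by omega) (by omega) ha1 (lt_trans ha2 ha1)
    split <;> split <;> omega
  have hinj : Set.InjOn (fun d => if d ∈ F then d+1 else d) (desF l) := by
    intro d1 hd1 d2 hd2 heq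
    by_contra hne
    rcases lt_or_gt_of_ne hne with h | h
    · have := hmono d1 hd1 d2 hd2 h; simp only [] at heq; omega
    · have := hmono d2 hd2 d1 hd1 h; simp only [] at heq; omega
  have hcard := Finset.card_le_card_of_injOn _ hg hinj
  rw [Finset.card_sdiff_of_subset hFsub, Finset.card_range] at hcard
  have : desn l = (desF l).card := rfl
  omega

end LisAux
namespace LisAux

lemma getD_snoc_self (a : List ℕ) (x : ℕ) : (a ++ [x]).getD a.length 0 = x := by
  rw [List.getD_append_right _ _ _ _ le_rfl]; simp

lemma getD_snoc_lt (a : List ℕ) (x : ℕ) {i : ℕ} (h : i < a.length) :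
    (a ++ [x]).getD i 0 = a.getD i 0 := List.getD_append _ _ _ _ h

lemma desn_nil_singleton (x : ℕ) : desn [x] = 0 := by simp [desn, desF]

lemma desF_snoc_ge (a : List ℕ) (x : ℕ) (ha : a ≠ [])
    (h : ¬ (x < a.getD (a.length - 1) 0)) : desF (a ++ [x]) = desF a := by
  have hs : 1 ≤ a.length := List.length_pos_iff.mpr ha
  ext i
  rw [mem_desF, mem_desF]
  simp only [List.length_append, List.length_singleton]
  constructor
  · rintro ⟨hi, hlt⟩
    rcases Nat.lt_or_ge i (a.length - 1) with hi' | hi'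
    · rw [getD_snoc_lt a x (by omega), getD_snoc_lt a x (by omega)] at hlt
      exact ⟨hi', hlt⟩
    · have hieq : i = a.length - 1 := by omega
      rw [hieq] at hlt
      rw [show a.length - 1 + 1 = a.length by omega] at hlt
      rw [getD_snoc_self, getD_snoc_lt a x (by omega)] at hlt
      exact absurd hlt h
  · rintro ⟨hi, hlt⟩
    refine ⟨by omega, ?_⟩
    rw [getD_snoc_lt a x (by omega), getD_snoc_lt a x (by omega)]
    exact hlt

lemma desF_snoc_lt (a : List ℕ) (x : ℕ) (ha : a ≠ [])
    (h : x < a.getD (a.length - 1) 0) : desF (a ++ [x]) = insert (a.length - 1) (desF a) := by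
  have hs : 1 ≤ a.length := List.length_pos_iff.mpr ha
  ext i
  rw [mem_desF, Finset.mem_insert, mem_desF]
  simp only [List.length_append, List.length_singleton]
  constructor
  · rintro ⟨hi, hlt⟩
    rcases Nat.lt_or_ge i (a.length - 1) with hi' | hi'
    · rw [getD_snoc_lt a x (by omega), getD_snoc_lt a x (by omega)] at hlt
      exact Or.inr ⟨hi', hlt⟩
    · exact Or.inl (by omega)
  · rintro (hieq | ⟨hi, hlt⟩)
    · refine ⟨by omega, ?_⟩
      rw [hieq, show a.length - 1 + 1 = a.length by omega, getD_snoc_self,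
        getD_snoc_lt a x (by omega)]
      exact h
    · refine ⟨by omega, ?_⟩
      rw [getD_snoc_lt a x (by omega), getD_snoc_lt a x (by omega)]
      exact hlt

lemma desn_snoc_ge (a : List ℕ) (x : ℕ) (ha : a ≠ [])
    (h : ¬ (x < a.getD (a.length - 1) 0)) : desn (a ++ [x]) = desn a := by
  rw [desn, desF_snoc_ge a x ha h]; rfl

lemma desn_snoc_lt (a : List ℕ) (x : ℕ) (ha : a ≠ [])
    (h : x < a.getD (a.length - 1) 0) : desn (a ++ [x]) = desn a + 1 := by
  rw [desn, desF_snoc_lt a x ha h, Finset.card_insert_of_notMem]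
  · rfl
  · intro hc
    have := (mem_desF.mp hc).1
    omega

lemma desn_snoc_big (a : List ℕ) (x : ℕ) (h : ∀ y ∈ a, y < x) :
    desn (a ++ [x]) = desn a := by
  by_cases ha : a = []
  · subst ha; simp [desn_nil_singleton, desn, desF]
  · refine desn_snoc_ge a x ha ?_
    intro hc
    have hs : 1 ≤ a.length := List.length_pos_iff.mpr ha
    have := h _ (getD_mem a (show a.length - 1 < a.length by omega))
    omega

lemma singleton_of_length_one (t : List ℕ) (h : t.length = 1) : t = [t.getD 0 0] := by
  match t, h with
  | [a], _ => rfl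

lemma pair_of_length_two (t : List ℕ) (h : t.length = 2) : t = [t.getD 0 0, t.getD 1 0] := by
  match t, h with
  | [a, b], _ => rfl

lemma getD_drop (l : List ℕ) (i j : ℕ) (h : i + j < l.length) :
    (l.drop i).getD j 0 = l.getD (i+j) 0 := by
  rw [List.getD_eq_getElem _ _ (by rw [List.length_drop]; omega),
    List.getD_eq_getElem _ _ h]
  exact List.getElem_drop

lemma eq_snoc {l : List ℕ} {m : ℕ} (hlen : l.length = m) (hm : 1 ≤ m) :
    l = l.take (m-1) ++ [l.getD (m-1) 0] := by
  conv_lhs => rw [← List.take_append_drop (m-1) l]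
  congr 1
  have hd : (l.drop (m-1)).length = 1 := by rw [List.length_drop]; omega
  rw [singleton_of_length_one _ hd, getD_drop l (m-1) 0 (by omega)]
  norm_num

lemma eq_snoc2 {l : List ℕ} {m : ℕ} (hlen : l.length = m) (hm : 2 ≤ m) :
    l = l.take (m-2) ++ [l.getD (m-2) 0, l.getD (m-1) 0] := by
  conv_lhs => rw [← List.take_append_drop (m-2) l]
  congr 1
  have hd : (l.drop (m-2)).length = 2 := by rw [List.length_drop]; omega
  rw [pair_of_length_two _ hd, getD_drop l (m-2) 0 (by omega),
    getD_drop l (m-2) 1 (by omega), show m-2+0 = m-2 from rfl, show m-2+1 = m-1 by omega]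

lemma perm_snoc_iff (a : List ℕ) (k : ℕ) :
    (a ++ [k+1]).Perm (iota (k+1)) ↔ a.Perm (iota k) := by
  rw [iota_succ]
  exact List.perm_append_right_iff _

lemma perm_snoc2_iff (a : List ℕ) (k : ℕ) :
    (a ++ [k+2, k+1]).Perm (iota (k+2)) ↔ a.Perm (iota k) := by
  have h0 : (a ++ [k+2, k+1]).Perm ((a ++ [k+1]) ++ [k+2]) := by
    have h1 : (a ++ [k+2, k+1]).Perm (a ++ [k+1, k+2]) :=
      List.Perm.append_left a (List.Perm.swap (k+1) (k+2) [])
    simpa using h1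
  rw [iota_succ (k+1), iota_succ k]
  constructor
  · intro h
    exact (List.perm_append_right_iff _).mp
      ((List.perm_append_right_iff _).mp (h0.symm.trans h))
  · intro h
    exact h0.trans ((List.perm_append_right_iff _).mpr
      ((List.perm_append_right_iff _).mpr h))

lemma perm_mid_iff (a : List ℕ) (v k : ℕ) :
    (a ++ [k+1, v]).Perm (iota (k+1)) ↔ (a ++ [v]).Perm (iota k) := by
  have h0 : (a ++ [k+1, v]).Perm ((a ++ [v]) ++ [k+1]) := by
    have h1 : (a ++ [k+1, v]).Perm (a ++ [v, k+1]) :=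
      List.Perm.append_left a (List.Perm.swap v (k+1) [])
    simpa using h1
  rw [iota_succ k]
  constructor
  · intro h
    exact (List.perm_append_right_iff _).mp (h0.symm.trans h)
  · intro h
    exact h0.trans ((List.perm_append_right_iff _).mpr h)

lemma okl_append_left {a b : List ℕ} (h : OKl (a ++ b)) : OKl a := by
  intro i j k h1 h2 h3 hji hki
  refine h i j k h1 h2 (by simp; omega) ?_ ?_
  · rw [List.getD_append _ _ _ _ (by omega), List.getD_append _ _ _ _ (by omega)]
    exact hji
  · rw [List.getD_append _ _ _ _ (by omega), List.getD_append _ _ _ _ (by omega)]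
    exact hki

lemma okl_snoc {a : List ℕ} {x : ℕ} (hok : OKl a) (hbig : ∀ y ∈ a, y < x) :
    OKl (a ++ [x]) := by
  intro i j k h1 h2 h3 hji hki
  have hs : (a ++ [x]).length = a.length + 1 := by simp
  rcases Nat.lt_or_ge k a.length with hk | hk
  · rw [getD_snoc_lt a x (by omega), getD_snoc_lt a x (by omega)] at hji
    rw [getD_snoc_lt a x hk, getD_snoc_lt a x (by omega)] at hki
    exact hok i j k h1 h2 hk hji hki
  · have hkeq : k = a.length := by omega
    rw [hkeq, getD_snoc_self, getD_snoc_lt a x (by omega)] at hki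
    exact absurd hki (not_lt.mpr (le_of_lt (hbig _ (getD_mem a (by omega)))))

lemma okl_snoc2 {a : List ℕ} {x₁ x₂ : ℕ} (hok : OKl a) (hbig : ∀ y ∈ a, y < x₂)
    (h12 : x₂ < x₁) : OKl (a ++ [x₁, x₂]) := by
  have hkey : a ++ [x₁, x₂] = (a ++ [x₁]) ++ [x₂] := by simp
  have g1 : (a ++ [x₁, x₂]).getD a.length 0 = x₁ := by
    rw [hkey, getD_snoc_lt _ x₂ (by simp), getD_snoc_self]
  have g2 : (a ++ [x₁, x₂]).getD (a.length + 1) 0 = x₂ := by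
    rw [hkey, show a.length + 1 = (a ++ [x₁]).length by simp, getD_snoc_self]
  intro i j k h1 h2 h3 hji hki
  simp only [List.length_append, List.length_cons, List.length_nil] at h3
  rcases Nat.lt_or_ge k a.length with hk | hk
  · rw [List.getD_append _ _ _ _ (by omega), List.getD_append _ _ _ _ (by omega)] at hji
    rw [List.getD_append _ _ _ _ hk, List.getD_append _ _ _ _ (by omega)] at hki
    exact hok i j k h1 h2 hk hji hki
  · have hi : i < a.length := by omega
    rw [List.getD_append _ _ _ _ hi] at hki
    rcases Nat.eq_or_lt_of_le hk with hkeq | hkgt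
    · rw [← hkeq, g1] at hki
      exact absurd hki (by have := hbig _ (getD_mem a hi); omega)
    · have hkeq : k = a.length + 1 := by omega
      rw [hkeq, g2] at hki
      exact absurd hki (by have := hbig _ (getD_mem a hi); omega)

lemma okl_mid {a : List ℕ} {v x : ℕ} (hok : OKl (a ++ [v])) (hbig : ∀ y ∈ a, y < x) :
    OKl (a ++ [x, v]) := by
  have hkey : a ++ [x, v] = (a ++ [x]) ++ [v] := by simp
  have g1 : (a ++ [x, v]).getD a.length 0 = x := by
    rw [hkey, getD_snoc_lt _ v (by simp), getD_snoc_self]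
  have g2 : (a ++ [x, v]).getD (a.length + 1) 0 = v := by
    rw [hkey, show a.length + 1 = (a ++ [x]).length by simp, getD_snoc_self]
  have hrlen : (a ++ [v]).length = a.length + 1 := by simp
  intro i j k h1 h2 h3 hji hki
  simp only [List.length_append, List.length_cons, List.length_nil] at h3
  rcases Nat.lt_or_ge k a.length with hk | hk
  · rw [List.getD_append _ _ _ _ (by omega), List.getD_append _ _ _ _ (by omega)] at hji
    rw [List.getD_append _ _ _ _ hk, List.getD_append _ _ _ _ (by omega)] at hki
    refine hok i j k h1 h2 (by omega) ?_ ?_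
    · rw [List.getD_append _ _ _ _ (by omega), List.getD_append _ _ _ _ (by omega)]
      exact hji
    · rw [List.getD_append _ _ _ _ (by omega), List.getD_append _ _ _ _ (by omega)]
      exact hki
  · have hi : i < a.length := by omega
    rw [List.getD_append _ _ _ _ hi] at hki
    rcases Nat.eq_or_lt_of_le hk with hkeq | hkgt
    · rw [← hkeq, g1] at hki
      exact absurd hki (by have := hbig _ (getD_mem a hi); omega)
    · have hkeq : k = a.length + 1 := by omega
      rw [hkeq, g2] at hki
      rcases Nat.lt_or_ge j a.length with hj | hj
      · rw [List.getD_append _ _ _ _ hj, List.getD_append _ _ _ _ hi] at hji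
        refine hok i j a.length h1 hj (by omega) ?_ ?_
        · rw [List.getD_append _ _ _ _ hj, List.getD_append _ _ _ _ hi]
          exact hji
        · rw [getD_snoc_self, List.getD_append _ _ _ _ hi]
          exact hki
      · have hjeq : j = a.length := by omega
        rw [hjeq, g1, List.getD_append _ _ _ _ hi] at hji
        exact absurd hji (by have := hbig _ (getD_mem a hi); omega)

lemma okl_unmid {a : List ℕ} {v x : ℕ} (hok : OKl (a ++ [x, v])) : OKl (a ++ [v]) := by
  have g2 : (a ++ [x, v]).getD (a.length + 1) 0 = v := by
    rw [show a ++ [x, v] = (a ++ [x]) ++ [v] by simp,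
      show a.length + 1 = (a ++ [x]).length by simp, getD_snoc_self]
  intro i j k h1 h2 h3 hji hki
  simp only [List.length_append, List.length_cons, List.length_nil] at h3
  have hi : i < a.length := by omega
  have hj : j < a.length := by omega
  rw [List.getD_append _ _ _ _ hj, List.getD_append _ _ _ _ hi] at hji
  rcases Nat.lt_or_ge k a.length with hk | hk
  · rw [List.getD_append _ _ _ _ hk, List.getD_append _ _ _ _ hi] at hki
    refine hok i j k h1 h2 (by simp; omega) ?_ ?_
    · rw [List.getD_append _ _ _ _ hj, List.getD_append _ _ _ _ hi]
      exact hji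
    · rw [List.getD_append _ _ _ _ hk, List.getD_append _ _ _ _ hi]
      exact hki
  · have hkeq : k = a.length := by omega
    rw [hkeq, getD_snoc_self, List.getD_append _ _ _ _ hi] at hki
    refine hok i j (a.length + 1) h1 (by omega) (by simp) ?_ ?_
    · rw [List.getD_append _ _ _ _ hj, List.getD_append _ _ _ _ hi]
      exact hji
    · rw [g2, List.getD_append _ _ _ _ hi]
      exact hki

end LisAux
namespace LisAux

def MProp (n m : ℕ) (l : List ℕ) : Prop :=
  l.length = m ∧ l.Perm (iota m) ∧ OKl l ∧ m = n + desn l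

abbrev Mset (n m : ℕ) : Type := {l : List ℕ // MProp n m l}

lemma mem_iff (n m : ℕ) (l : List ℕ) :
    (l.length = m ∧ IsPermList l ∧ ¬ Involves [3,1,2] l ∧ ¬ Involves [3,2,1] l ∧
      Involves (iota n) l ∧ ¬ Involves (iota (n+1)) l) ↔ MProp n m l := by
  constructor
  · rintro ⟨hlen, hperm, h312, h321, hin, hnotin⟩
    have hperm' : l.Perm (iota m) := by
      have h : iota l.length = iota m := by rw [hlen]
      have hp : l.Perm (iota l.length) := hperm
      rw [← h]; exact hp
    have hnd := nodup_of_perm hperm'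
    have hok : OKl l := by
      intro i j k h1 h2 h3 hji hki
      rcases involves_of_triple hnd h1 h2 h3 hji hki with h | h
      · exact h312 h
      · exact h321 h
    refine ⟨hlen, hperm', hok, ?_⟩
    have hin' : HasInc l n := (involves_iota_iff l n).mp hin
    have hnot' : ¬ HasInc l (n+1) := fun h => hnotin ((involves_iota_iff l (n+1)).mpr h)
    have hlow := hasInc_of_okl hnd hok
    have hup := not_hasInc_succ hok
    have hd := desn_le l
    have h1 : ¬ (n + 1 ≤ l.length - desn l) := fun h => hnot' (hasInc_mono hlow h)
    have h2 : ¬ (l.length - desn l + 1 ≤ n) := fun h => hup (hasInc_mono hin' h)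
    omega
  · rintro ⟨hlen, hperm, hok, hcnt⟩
    have hnd := nodup_of_perm hperm
    have hd := desn_le l
    have hneq : n = l.length - desn l := by omega
    refine ⟨hlen, ?_, okl_not_involves_312 hok, okl_not_involves_321 hok, ?_, ?_⟩
    · show l.Perm (iota l.length)
      rw [hlen]; exact hperm
    · exact (involves_iota_iff l n).mpr (by rw [hneq]; exact hasInc_of_okl hnd hok)
    · intro hc
      exact not_hasInc_succ hok (by rw [← hneq]; exact (involves_iota_iff l (n+1)).mp hc)

lemma finite_subtype_of_bounded (m : ℕ) (P : List ℕ → Prop)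
    (hP : ∀ l, P l → l.length = m ∧ ∀ x ∈ l, x ≤ m) : Finite {l : List ℕ // P l} := by
  refine Finite.of_injective
    (fun x : {l : List ℕ // P l} => (fun i : Fin m =>
      (⟨x.1.getD i 0, by
        have h := hP x.1 x.2
        have h2 := h.2 _ (getD_mem x.1 (show (i:ℕ) < x.1.length by rw [h.1]; exact i.2))
        omega⟩ : Fin (m+1)))) ?_
  intro x y hxy
  apply Subtype.ext
  have hx := hP x.1 x.2
  have hy := hP y.1 y.2
  apply List.ext_getElem (by rw [hx.1, hy.1])
  intro i h1 h2
  have h3 := congrFun hxy ⟨i, by rw [← hx.1]; exact h1⟩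
  have hval := congrArg Fin.val h3
  simp only at hval
  rw [List.getD_eq_getElem _ _ h1, List.getD_eq_getElem _ _ h2] at hval
  exact hval

instance finMset (n m : ℕ) : Finite (Mset n m) :=
  finite_subtype_of_bounded m _ (fun l hl =>
    ⟨hl.1, fun x hx => (mem_iota.mp (hl.2.1.mem_iff.mp hx)).2⟩)

instance finThm (n m : ℕ) : Finite {l : List ℕ // l.length = m ∧ IsPermList l ∧
    ¬ Involves [3,1,2] l ∧ ¬ Involves [3,2,1] l ∧
    Involves (iota n) l ∧ ¬ Involves (iota (n+1)) l} :=
  finite_subtype_of_bounded m _ (fun l hl => by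
    refine ⟨hl.1, fun x hx => ?_⟩
    have h2 : l.Perm (iota l.length) := hl.2.1
    have := (mem_iota.mp (h2.mem_iff.mp hx)).2
    omega)

lemma card_eq_Mset (n m : ℕ) :
    Nat.card {l : List ℕ // l.length = m ∧ IsPermList l ∧
      ¬ Involves [3,1,2] l ∧ ¬ Involves [3,2,1] l ∧
      Involves (iota n) l ∧ ¬ Involves (iota (n+1)) l} = Nat.card (Mset n m) :=
  Nat.card_congr (Equiv.subtypeEquivRight (mem_iff n m))

lemma okl_nil : OKl ([] : List ℕ) := by
  intro i j k h1 h2 h3 _ _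
  simp at h3

lemma desn_nil : desn ([] : List ℕ) = 0 := by simp [desn, desF]

lemma card_M00 : Nat.card (Mset 0 0) = 1 := by
  haveI : Unique (Mset 0 0) := by
    refine ⟨⟨⟨[], rfl, by simp [iota], okl_nil, by simp [desn_nil]⟩⟩, ?_⟩
    rintro ⟨l, hlen, _⟩
    exact Subtype.ext (List.length_eq_zero_iff.mp hlen)
  exact Nat.card_unique

lemma card_M0m (m : ℕ) (hm : 1 ≤ m) : Nat.card (Mset 0 m) = 0 := by
  haveI : IsEmpty (Mset 0 m) := by
    refine ⟨?_⟩
    rintro ⟨l, hlen, _, _, hcnt⟩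
    have hd := desn_le l
    omega
  exact Nat.card_of_isEmpty

lemma card_Mn0 (n : ℕ) (hn : 1 ≤ n) : Nat.card (Mset n 0) = 0 := by
  haveI : IsEmpty (Mset n 0) := by
    refine ⟨?_⟩
    rintro ⟨l, hlen, _, _, hcnt⟩
    omega
  exact Nat.card_of_isEmpty

lemma card_Mn1 (n : ℕ) (hn : 2 ≤ n) : Nat.card (Mset n 1) = 0 := by
  haveI : IsEmpty (Mset n 1) := by
    refine ⟨?_⟩
    rintro ⟨l, hlen, _, _, hcnt⟩
    omega
  exact Nat.card_of_isEmpty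

lemma card_M11 : Nat.card (Mset 1 1) = 1 := by
  haveI : Unique (Mset 1 1) := by
    refine ⟨⟨⟨[1], rfl, by decide, ?_, by rw [desn_nil_singleton]⟩⟩, ?_⟩
    · intro i j k h1 h2 h3 _ _
      simp at h3; omega
    · rintro ⟨l, hlen, hperm, hok, hcnt⟩
      apply Subtype.ext
      have hkey := singleton_of_length_one l hlen
      have hv := mem_iota.mp (hperm.mem_iff.mp (getD_mem l (show 0 < l.length by omega)))
      show l = [1]
      rw [hkey, show l.getD 0 0 = 1 by omega]
  exact Nat.card_unique

lemma card_M12 : Nat.card (Mset 1 2) = 1 := by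
  haveI : Unique (Mset 1 2) := by
    refine ⟨⟨⟨[2,1], rfl, by decide, ?_, by decide⟩⟩, ?_⟩
    · intro i j k h1 h2 h3 _ _
      simp at h3; omega
    · rintro ⟨l, hlen, hperm, hok, hcnt⟩
      apply Subtype.ext
      have hnd := nodup_of_perm hperm
      have hkey := pair_of_length_two l hlen
      have hv0 := mem_iota.mp (hperm.mem_iff.mp (getD_mem l (show 0 < l.length by omega)))
      have hv1 := mem_iota.mp (hperm.mem_iff.mp (getD_mem l (show 1 < l.length by omega)))
      have hne : l.getD 0 0 ≠ l.getD 1 0 := fun h =>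
        absurd (getD_inj hnd (by omega) (by omega) h) (by omega)
      have hdes : desn l = 1 := by omega
      have hpos : (desF l).Nonempty := Finset.card_pos.mp (by rw [← desn]; omega)
      obtain ⟨d, hd⟩ := hpos
      have hd' := mem_desF.mp hd
      have hd0 : d = 0 := by omega
      rw [hd0] at hd'
      have hlt : l.getD 1 0 < l.getD 0 0 := by simpa using hd'.2
      show l = [2,1]
      rw [hkey, show l.getD 0 0 = 2 by omega, show l.getD 1 0 = 1 by omega]
  exact Nat.card_unique

lemma card_M1m (m : ℕ) (hm : 3 ≤ m) : Nat.card (Mset 1 m) = 0 := by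
  haveI : IsEmpty (Mset 1 m) := by
    refine ⟨?_⟩
    rintro ⟨l, hlen, hperm, hok, hcnt⟩
    have hd := desn_le l
    have hsub : desF l ⊆ Finset.range (m-1) := by
      intro d hd2
      exact Finset.mem_range.mpr (by have := (mem_desF.mp hd2).1; omega)
    have heq : desF l = Finset.range (m-1) := by
      apply Finset.eq_of_subset_of_card_le hsub
      rw [Finset.card_range]
      have : desn l = (desF l).card := rfl
      omega
    have h0 : (0:ℕ) ∈ desF l := by rw [heq]; exact Finset.mem_range.mpr (by omega)
    have h1 : (1:ℕ) ∈ desF l := by rw [heq]; exact Finset.mem_range.mpr (by omega)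
    have c0 := (mem_desF.mp h0).2
    have c1 := (mem_desF.mp h1).2
    simp only [show (0:ℕ)+1 = 1 from rfl, show (1:ℕ)+1 = 2 from rfl] at c0 c1
    exact hok 0 1 2 (by omega) (by omega) (by omega) c0 (by omega)
  exact Nat.card_of_isEmpty

end LisAux
namespace LisAux

lemma propA {n m : ℕ} {l : List ℕ} (h : MProp (n+1) (m+1) l) (hlast : l.getD m 0 = m+1) :
    MProp n m (l.take m) ∧ l = l.take m ++ [m+1] := by
  obtain ⟨hlen, hperm, hok, hcnt⟩ := h
  have hkey : l = l.take m ++ [m+1] := by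
    have h2 := eq_snoc hlen (by omega)
    rw [show m+1-1 = m from rfl, hlast] at h2
    exact h2
  have hta : (l.take m).length = m := by rw [List.length_take]; omega
  have hperm' : (l.take m).Perm (iota m) := (perm_snoc_iff _ m).mp (hkey ▸ hperm)
  have hok' : OKl (l.take m) := okl_append_left (hkey ▸ hok)
  have hnd : l.Nodup := nodup_of_perm hperm
  have hnm : (m+1) ∉ l.take m := by
    intro hc
    have hnd2 : (l.take m ++ [m+1]).Nodup := hkey ▸ hnd
    exact (List.disjoint_of_nodup_append hnd2) hc (by simp)
  have hbig : ∀ y ∈ l.take m, y < m+1 := by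
    intro y hy
    have hyl : y ∈ l := by rw [hkey]; exact List.mem_append_left _ hy
    have h3 := (mem_iota.mp (hperm.mem_iff.mp hyl)).2
    have hne : y ≠ m+1 := fun he => hnm (he ▸ hy)
    omega
  have hdes : desn l = desn (l.take m) := by
    conv_lhs => rw [hkey]
    exact desn_snoc_big _ _ hbig
  exact ⟨⟨hta, hperm', hok', by omega⟩, hkey⟩

lemma propA' {n m : ℕ} {a : List ℕ} (h : MProp n m a) :
    MProp (n+1) (m+1) (a ++ [m+1]) ∧ (a ++ [m+1]).getD m 0 = m+1 := by
  obtain ⟨hlen, hperm, hok, hcnt⟩ := h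
  have hbig : ∀ y ∈ a, y < m+1 := fun y hy => by
    have := (mem_iota.mp (hperm.mem_iff.mp hy)).2; omega
  refine ⟨⟨by simp [hlen], (perm_snoc_iff a m).mpr hperm, okl_snoc hok hbig, ?_⟩, ?_⟩
  · rw [desn_snoc_big a _ hbig]; omega
  · rw [← hlen]; exact getD_snoc_self a _

def equivA (n m : ℕ) :
    {x : Mset (n+1) (m+1) // x.1.getD m 0 = m+1} ≃ Mset n m where
  toFun x := ⟨x.1.1.take m, (propA x.1.2 x.2).1⟩
  invFun y := ⟨⟨y.1 ++ [m+1], (propA' y.2).1⟩, (propA' y.2).2⟩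
  left_inv x := by
    apply Subtype.ext; apply Subtype.ext
    exact (propA x.1.2 x.2).2.symm
  right_inv y := by
    apply Subtype.ext
    show (y.1 ++ [m+1]).take m = y.1
    exact List.take_left' y.2.1

lemma propB {n m : ℕ} {l : List ℕ} (h : MProp (n+1) (m+2) l) (hlast : l.getD (m+1) 0 = m+1) :
    MProp n m (l.take m) ∧ l = l.take m ++ [m+2, m+1] := by
  obtain ⟨hlen, hperm, hok, hcnt⟩ := h
  have htop := top_at_penult hlen (by omega) hperm hok
    (show l.getD (m+2-1) 0 ≠ m+2 by rw [show m+2-1 = m+1 from rfl, hlast]; omega)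
  rw [show m+2-2 = m from rfl] at htop
  have hkey : l = l.take m ++ [m+2, m+1] := by
    have h2 := eq_snoc2 hlen (by omega)
    rw [show m+2-1 = m+1 from rfl, show m+2-2 = m from rfl, hlast, htop] at h2
    exact h2
  have hta : (l.take m).length = m := by rw [List.length_take]; omega
  have hperm' : (l.take m).Perm (iota m) := (perm_snoc2_iff _ m).mp (hkey ▸ hperm)
  have hok' : OKl (l.take m) := okl_append_left (hkey ▸ hok)
  have hnd : l.Nodup := nodup_of_perm hperm
  have hdisj : (l.take m).Disjoint [m+2, m+1] :=
    List.disjoint_of_nodup_append (hkey ▸ hnd)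
  have hbig : ∀ y ∈ l.take m, y < m+1 := by
    intro y hy
    have hyl : y ∈ l := by rw [hkey]; exact List.mem_append_left _ hy
    have h3 := (mem_iota.mp (hperm.mem_iff.mp hyl)).2
    have hne : y ∉ [m+2, m+1] := fun hc => hdisj hy hc
    simp at hne
    omega
  have hbig2 : ∀ y ∈ l.take m, y < m+2 := fun y hy => lt_trans (hbig y hy) (by omega)
  have hdes : desn l = desn (l.take m) + 1 := by
    conv_lhs => rw [hkey, show l.take m ++ [m+2, m+1] = (l.take m ++ [m+2]) ++ [m+1] by simp]
    rw [desn_snoc_lt _ _ (by simp) (by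
      rw [show (l.take m ++ [m+2]).length - 1 = (l.take m).length by simp [hta],
        getD_snoc_self]; omega)]
    rw [desn_snoc_big _ _ hbig2]
  exact ⟨⟨hta, hperm', hok', by omega⟩, hkey⟩

lemma propB' {n m : ℕ} {a : List ℕ} (h : MProp n m a) :
    MProp (n+1) (m+2) (a ++ [m+2, m+1]) ∧ (a ++ [m+2, m+1]).getD (m+1) 0 = m+1 := by
  obtain ⟨hlen, hperm, hok, hcnt⟩ := h
  have hbig : ∀ y ∈ a, y < m+1 := fun y hy => by
    have := (mem_iota.mp (hperm.mem_iff.mp hy)).2; omega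
  have hbig2 : ∀ y ∈ a, y < m+2 := fun y hy => lt_trans (hbig y hy) (by omega)
  have hdes : desn (a ++ [m+2, m+1]) = desn a + 1 := by
    rw [show a ++ [m+2, m+1] = (a ++ [m+2]) ++ [m+1] by simp]
    rw [desn_snoc_lt _ _ (by simp) (by
      rw [show (a ++ [m+2]).length - 1 = a.length by simp, getD_snoc_self]; omega)]
    rw [desn_snoc_big _ _ hbig2]
  refine ⟨⟨by simp [hlen], (perm_snoc2_iff a m).mpr hperm, okl_snoc2 hok hbig (by omega), ?_⟩, ?_⟩
  · omega
  · rw [show a ++ [m+2, m+1] = (a ++ [m+2]) ++ [m+1] by simp,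
      show m+1 = (a ++ [m+2]).length by simp [hlen]]
    exact getD_snoc_self _ _

def equivB (n m : ℕ) :
    {x : Mset (n+1) (m+2) // x.1.getD (m+1) 0 = m+1} ≃ Mset n m where
  toFun x := ⟨x.1.1.take m, (propB x.1.2 x.2).1⟩
  invFun y := ⟨⟨y.1 ++ [m+2, m+1], (propB' y.2).1⟩, (propB' y.2).2⟩
  left_inv x := by
    apply Subtype.ext; apply Subtype.ext
    exact (propB x.1.2 x.2).2.symm
  right_inv y := by
    apply Subtype.ext
    show (y.1 ++ [m+2, m+1]).take m = y.1
    exact List.take_left' y.2.1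

lemma propC {n m : ℕ} {l : List ℕ} (h : MProp (n+1) (m+2) l)
    (hne2 : l.getD (m+1) 0 ≠ m+2) (hne1 : l.getD (m+1) 0 ≠ m+1) :
    MProp n (m+1) (l.take m ++ [l.getD (m+1) 0]) ∧
      (l.take m ++ [l.getD (m+1) 0]).getD m 0 ≠ m+1 ∧
      l = l.take m ++ [m+2, l.getD (m+1) 0] ∧ 1 ≤ m := by
  obtain ⟨hlen, hperm, hok, hcnt⟩ := h
  set v := l.getD (m+1) 0 with hv
  have htop := top_at_penult hlen (by omega) hperm hok
    (show l.getD (m+2-1) 0 ≠ m+2 from hne2)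
  rw [show m+2-2 = m from rfl] at htop
  have hvb : 1 ≤ v ∧ v ≤ m+2 := val_bounds hperm (show m+1 < l.length by omega)
  have hvm : v ≤ m := by omega
  have hm1 : 1 ≤ m := by omega
  have hkey : l = l.take m ++ [m+2, v] := by
    have h2 := eq_snoc2 hlen (by omega)
    rw [show m+2-1 = m+1 from rfl, show m+2-2 = m from rfl, htop] at h2
    exact h2
  have hta : (l.take m).length = m := by rw [List.length_take]; omega
  have hperm' : (l.take m ++ [v]).Perm (iota (m+1)) := (perm_mid_iff _ v (m+1)).mp (hkey ▸ hperm)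
  have hok' : OKl (l.take m ++ [v]) := okl_unmid (hkey ▸ hok)
  have hrlen : (l.take m ++ [v]).length = m+1 := by simp [hta]
  have hlastr : (l.take m ++ [v]).getD m 0 = v := by
    rw [List.getD_append_right _ _ _ _ (le_of_eq hta)]; simp [hta]
  -- last entry of (take m) is m+1
  have htopr := top_at_penult hrlen (by omega) hperm' hok'
    (show (l.take m ++ [v]).getD (m+1-1) 0 ≠ m+1 by
      rw [show m+1-1 = m from rfl, hlastr]; omega)
  rw [show m+1-2 = m-1 from rfl] at htopr
  have hlasta : (l.take m).getD (m-1) 0 = m+1 := by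
    rw [← List.getD_append _ [v] 0 (m-1) (by omega)]; exact htopr
  have hnd : l.Nodup := nodup_of_perm hperm
  have hdisj : (l.take m).Disjoint [m+2, v] :=
    List.disjoint_of_nodup_append (hkey ▸ hnd)
  have hbig2 : ∀ y ∈ l.take m, y < m+2 := by
    intro y hy
    have hyl : y ∈ l := by rw [hkey]; exact List.mem_append_left _ hy
    have h3 := (mem_iota.mp (hperm.mem_iff.mp hyl)).2
    have hne : y ∉ [m+2, v] := fun hc => hdisj hy hc
    simp at hne
    omega
  have hdesl : desn l = desn (l.take m) + 1 := by
    conv_lhs => rw [hkey, show l.take m ++ [m+2, v] = (l.take m ++ [m+2]) ++ [v] by simp]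
    rw [desn_snoc_lt _ _ (by simp) (by
      rw [show (l.take m ++ [m+2]).length - 1 = (l.take m).length by simp [hta],
        getD_snoc_self]; omega)]
    rw [desn_snoc_big _ _ hbig2]
  have hdesr : desn (l.take m ++ [v]) = desn (l.take m) + 1 := by
    rw [desn_snoc_lt _ _ (by rw [← List.length_pos_iff, hta]; omega) (by rw [hta, hlasta]; omega)]
  refine ⟨⟨hrlen, hperm', hok', by omega⟩, by rw [hlastr]; omega, hkey, hm1⟩

lemma propC' {n m : ℕ} {r : List ℕ} (h : MProp n (m+1) r) (hlast : r.getD m 0 ≠ m+1) :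
    MProp (n+1) (m+2) (r.take m ++ [m+2, r.getD m 0]) ∧
      (r.take m ++ [m+2, r.getD m 0]).getD (m+1) 0 ≠ m+2 ∧
      (r.take m ++ [m+2, r.getD m 0]).getD (m+1) 0 ≠ m+1 ∧
      r = r.take m ++ [r.getD m 0] := by
  obtain ⟨hlen, hperm, hok, hcnt⟩ := h
  set w := r.getD m 0 with hw
  have hwb : 1 ≤ w ∧ w ≤ m+1 := val_bounds hperm (show m < r.length by omega)
  have hwm : w ≤ m := by omega
  have hm1 : 1 ≤ m := by omega
  have hkeyr : r = r.take m ++ [w] := by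
    have h2 := eq_snoc hlen (by omega)
    rw [show m+1-1 = m from rfl] at h2
    exact h2
  have hta : (r.take m).length = m := by rw [List.length_take]; omega
  have htopr := top_at_penult hlen (by omega) hperm hok
    (show r.getD (m+1-1) 0 ≠ m+1 from hlast)
  rw [show m+1-2 = m-1 from rfl] at htopr
  have hlasta : (r.take m).getD (m-1) 0 = m+1 := by
    rw [← List.getD_append _ (r.drop m) 0 (m-1) (by omega), List.take_append_drop]
    exact htopr
  have hperm2 : (r.take m ++ [w]).Perm (iota (m+1)) := hkeyr ▸ hperm
  have hok2 : OKl (r.take m ++ [w]) := hkeyr ▸ hok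
  have hbig2 : ∀ y ∈ r.take m, y < m+2 := by
    intro y hy
    have hyl : y ∈ r := List.mem_of_mem_take hy
    have h3 := (mem_iota.mp (hperm.mem_iff.mp hyl)).2
    omega
  have hdesl : desn (r.take m ++ [m+2, w]) = desn (r.take m) + 1 := by
    rw [show r.take m ++ [m+2, w] = (r.take m ++ [m+2]) ++ [w] by simp]
    rw [desn_snoc_lt _ _ (by simp) (by
      rw [show (r.take m ++ [m+2]).length - 1 = (r.take m).length by simp [hta],
        getD_snoc_self]; omega)]
    rw [desn_snoc_big _ _ hbig2]
  have hdesr : desn r = desn (r.take m) + 1 := by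
    conv_lhs => rw [hkeyr]
    rw [desn_snoc_lt _ _ (by rw [← List.length_pos_iff, hta]; omega) (by rw [hta, hlasta]; omega)]
  have hg : (r.take m ++ [m+2, w]).getD (m+1) 0 = w := by
    rw [show r.take m ++ [m+2, w] = (r.take m ++ [m+2]) ++ [w] by simp,
      List.getD_append_right _ _ _ _ (by simp [hta] : (r.take m ++ [m+2]).length ≤ m+1)]
    simp [hta]
  refine ⟨⟨by simp [hta], (perm_mid_iff _ w (m+1)).mpr hperm2, okl_mid hok2 hbig2, by omega⟩,
    by rw [hg]; omega, by rw [hg]; omega, hkeyr⟩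

def equivC (n m : ℕ) :
    {x : Mset (n+1) (m+2) // x.1.getD (m+1) 0 ≠ m+2 ∧ x.1.getD (m+1) 0 ≠ m+1} ≃
      {y : Mset n (m+1) // y.1.getD m 0 ≠ m+1} where
  toFun x := ⟨⟨x.1.1.take m ++ [x.1.1.getD (m+1) 0], (propC x.1.2 x.2.1 x.2.2).1⟩,
    (propC x.1.2 x.2.1 x.2.2).2.1⟩
  invFun y := ⟨⟨y.1.1.take m ++ [m+2, y.1.1.getD m 0], (propC' y.1.2 y.2).1⟩,
    (propC' y.1.2 y.2).2.1, (propC' y.1.2 y.2).2.2.1⟩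
  left_inv x := by
    obtain ⟨hp, hc, hkey, hm1⟩ := propC x.1.2 x.2.1 x.2.2
    apply Subtype.ext; apply Subtype.ext
    show (x.1.1.take m ++ [x.1.1.getD (m+1) 0]).take m ++
      [m+2, (x.1.1.take m ++ [x.1.1.getD (m+1) 0]).getD m 0] = x.1.1
    have hta : (x.1.1.take m).length = m := by
      rw [List.length_take, x.1.2.1]; omega
    have hg2 : (x.1.1.take m ++ [x.1.1.getD (m+1) 0]).getD m 0 = x.1.1.getD (m+1) 0 := by
      rw [List.getD_append_right _ _ _ _ (le_of_eq hta)]; simp [hta]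
    rw [List.take_left' hta, hg2]
    exact hkey.symm
  right_inv y := by
    obtain ⟨hp, hc1, hc2, hkeyr⟩ := propC' y.1.2 y.2
    apply Subtype.ext; apply Subtype.ext
    show (y.1.1.take m ++ [m+2, y.1.1.getD m 0]).take m ++
      [(y.1.1.take m ++ [m+2, y.1.1.getD m 0]).getD (m+1) 0] = y.1.1
    have hta : (y.1.1.take m).length = m := by
      rw [List.length_take, y.1.2.1]; omega
    have hg : (y.1.1.take m ++ [m+2, y.1.1.getD m 0]).getD (m+1) 0 = y.1.1.getD m 0 := by
      rw [show y.1.1.take m ++ [m+2, y.1.1.getD m 0] =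
        (y.1.1.take m ++ [m+2]) ++ [y.1.1.getD m 0] by simp,
        List.getD_append_right _ _ _ _ (by simp [hta] : (y.1.1.take m ++ [m+2]).length ≤ m+1)]
      simp [hta]
    rw [hg, List.take_left' hta]
    exact hkeyr.symm
end LisAux
namespace LisAux

lemma card_split' {α : Type*} [Finite α] (q : α → Prop) :
    Nat.card α = Nat.card {x // q x} + Nat.card {x // ¬ q x} := by
  classical
  rw [← Nat.card_sum]
  exact (Nat.card_congr (Equiv.sumCompl q)).symm

lemma card_split2 {α : Type*} [Finite α] (p q : α → Prop) :
    Nat.card {x // p x} = Nat.card {x // p x ∧ q x} + Nat.card {x // p x ∧ ¬ q x} := by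
  classical
  rw [card_split' (fun y : {x // p x} => q y.1)]
  congr 1
  · exact Nat.card_congr (Equiv.subtypeSubtypeEquivSubtypeInter p q)
  · exact Nat.card_congr (Equiv.subtypeSubtypeEquivSubtypeInter p (fun x => ¬ q x))

lemma main_identity (n m : ℕ) :
    Nat.card (Mset (n+2) (m+2)) + Nat.card (Mset n m)
      = 2 * Nat.card (Mset (n+1) (m+1)) + Nat.card (Mset (n+1) m) := by
  classical
  have h1 := card_split' (fun x : Mset (n+2) (m+2) => x.1.getD (m+1) 0 = m+2)
  have h2 := card_split2 (fun x : Mset (n+2) (m+2) => ¬ x.1.getD (m+1) 0 = m+2)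
    (fun x => x.1.getD (m+1) 0 = m+1)
  have e1 : Nat.card {x : Mset (n+2) (m+2) // x.1.getD (m+1) 0 = m+2}
      = Nat.card (Mset (n+1) (m+1)) := Nat.card_congr (equivA (n+1) (m+1))
  have e2 : Nat.card {x : Mset (n+2) (m+2) //
      ¬ x.1.getD (m+1) 0 = m+2 ∧ x.1.getD (m+1) 0 = m+1}
      = Nat.card (Mset (n+1) m) := by
    refine Nat.card_congr ((Equiv.subtypeEquivRight (fun x => ?_)).trans (equivB (n+1) m))
    constructor
    · rintro ⟨_, h⟩; exact h
    · intro h; exact ⟨by omega, h⟩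
  have e3 : Nat.card {x : Mset (n+2) (m+2) //
      ¬ x.1.getD (m+1) 0 = m+2 ∧ ¬ x.1.getD (m+1) 0 = m+1}
      = Nat.card {y : Mset (n+1) (m+1) // y.1.getD m 0 ≠ m+1} := by
    refine Nat.card_congr ((Equiv.subtypeEquivRight (fun x => ?_)).trans (equivC (n+1) m))
    exact Iff.rfl
  have h3 := card_split' (fun y : Mset (n+1) (m+1) => y.1.getD m 0 = m+1)
  have e4 : Nat.card {y : Mset (n+1) (m+1) // y.1.getD m 0 = m+1}
      = Nat.card (Mset n m) := Nat.card_congr (equivA n m)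
  have e5 : Nat.card {y : Mset (n+1) (m+1) // ¬ y.1.getD m 0 = m+1}
      = Nat.card {y : Mset (n+1) (m+1) // y.1.getD m 0 ≠ m+1} := rfl
  omega

end LisAux

/-- If `p n` is the polynomial whose coefficient of `X^m` counts permutations of size `m`
avoiding `312` and `321` whose longest increasing subsequence has length exactly `n`,
then `p 0 = 1`, `p 1 = X + X²`, and `p n = (2X + X²) p (n−1) − X² p (n−2)` for `n ≥ 2`. -/
theorem lis_polynomial_recurrence (p : ℕ → Polynomial ℤ)
    (hp : ∀ n m : ℕ, (p n).coeff m =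
      (Nat.card {l : List ℕ // l.length = m ∧ IsPermList l ∧
        ¬ Involves [3, 1, 2] l ∧ ¬ Involves [3, 2, 1] l ∧
        Involves (iota n) l ∧ ¬ Involves (iota (n + 1)) l} : ℤ)) :
    p 0 = 1 ∧ p 1 = Polynomial.X + Polynomial.X ^ 2 ∧
      ∀ n : ℕ, 2 ≤ n →
        p n = (2 * Polynomial.X + Polynomial.X ^ 2) * p (n - 1)
          - Polynomial.X ^ 2 * p (n - 2) := by
  have hc : ∀ n m : ℕ, (p n).coeff m = (Nat.card (LisAux.Mset n m) : ℤ) := by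
    intro n m
    rw [hp n m, LisAux.card_eq_Mset]
  refine ⟨?_, ?_, ?_⟩
  · apply Polynomial.ext
    intro m
    rw [hc, Polynomial.coeff_one]
    match m with
    | 0 => rw [if_pos rfl, LisAux.card_M00]; norm_num
    | (k+1) => rw [if_neg (by omega), LisAux.card_M0m (k+1) (by omega)]; norm_num
  · apply Polynomial.ext
    intro m
    rw [hc, Polynomial.coeff_add, Polynomial.coeff_X, Polynomial.coeff_X_pow]
    match m with
    | 0 => rw [if_neg (by omega), if_neg (by omega), LisAux.card_Mn0 1 (by omega)]; norm_num
    | 1 => rw [if_pos rfl, if_neg (by omega), LisAux.card_M11]; norm_num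
    | 2 => rw [if_neg (by omega), if_pos rfl, LisAux.card_M12]; norm_num
    | (k+3) => rw [if_neg (by omega), if_neg (by omega), LisAux.card_M1m (k+3) (by omega)]
               norm_num
  · intro n hn
    obtain ⟨k, rfl⟩ : ∃ k, n = k + 2 := ⟨n - 2, by omega⟩
    apply Polynomial.ext
    intro m
    have hq : (2 * Polynomial.X + Polynomial.X^2) * p (k+2-1)
        = Polynomial.X * p (k+1) + Polynomial.X * p (k+1)
          + Polynomial.X * (Polynomial.X * p (k+1)) := by
      rw [show k+2-1 = k+1 from rfl]; ring
    have hr : Polynomial.X^2 * p (k+2-2) = Polynomial.X * (Polynomial.X * p k) := by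
      rw [show k+2-2 = k from rfl]; ring
    rw [Polynomial.coeff_sub, hq, hr, Polynomial.coeff_add, Polynomial.coeff_add]
    match m with
    | 0 =>
      rw [hc]
      simp only [Polynomial.mul_coeff_zero, Polynomial.coeff_X_zero, zero_mul]
      rw [LisAux.card_Mn0 (k+2) (by omega)]
      norm_num
    | 1 =>
      rw [hc]
      rw [show (1:ℕ) = 0 + 1 from rfl, Polynomial.coeff_X_mul, Polynomial.coeff_X_mul,
        Polynomial.coeff_X_mul]
      simp only [Polynomial.mul_coeff_zero, Polynomial.coeff_X_zero, zero_mul]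
      rw [hc (k+1) 0, LisAux.card_Mn0 (k+1) (by omega),
        show (0:ℕ) + 1 = 1 from rfl, LisAux.card_Mn1 (k+2) (by omega)]
      norm_num
    | (j+2) =>
      rw [hc]
      rw [show j+2 = (j+1) + 1 from rfl, Polynomial.coeff_X_mul, Polynomial.coeff_X_mul,
        Polynomial.coeff_X_mul, Polynomial.coeff_X_mul, Polynomial.coeff_X_mul]
      rw [hc (k+1) (j+1), hc (k+1) j, hc k j]
      have hmain := LisAux.main_identity k j
      have hbridge : Nat.card (LisAux.Mset (k+2) (j+1+1)) = Nat.card (LisAux.Mset (k+2) (j+2)) := rfl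
      push_cast
      omega
end

section
/- Define polynomials q_n ∈ ℝ[t] by q_0 = 1, q_1 = 1 + t, and q_n = (2+t)·q_{n−1} − q_{n−2} for n ≥ 2. Then for every n ≥ 0, q_n(−4X²) = (−1)^n·U_{2n}(X) as an identity of polynomials in ℝ[X], where U_m denotes the Chebyshev polynomial of the second kind (U_0 = 1, U_1 = 2X, U_{m+2} = 2X·U_{m+1} − U_m). -/
/-- If `q 0 = 1`, `q 1 = 1 + t`, `q n = (2 + t) q (n−1) − q (n−2)` and `U` satisfies the
Chebyshev (second kind) recurrence, then `q_n(−4X²) = (−1)^n U_{2n}(X)`. -/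
theorem q_eq_chebyshev (q U : ℕ → Polynomial ℝ)
    (hq0 : q 0 = 1) (hq1 : q 1 = 1 + Polynomial.X)
    (hq : ∀ n : ℕ, 2 ≤ n → q n = (2 + Polynomial.X) * q (n - 1) - q (n - 2))
    (hU0 : U 0 = 1) (hU1 : U 1 = 2 * Polynomial.X)
    (hU : ∀ m : ℕ, U (m + 2) = 2 * Polynomial.X * U (m + 1) - U m) :
    ∀ n : ℕ, (q n).comp (-4 * Polynomial.X ^ 2) = (-1) ^ n * U (2 * n) := by
  have key : ∀ m, U (m + 4) = (4 * Polynomial.X ^ 2 - 2) * U (m + 2) - U m := by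
    intro m
    have h1 := hU m
    have h2 := hU (m + 1)
    have h3 := hU (m + 2)
    linear_combination h3 + 2 * Polynomial.X * h2 + h1
  intro n
  induction n using Nat.twoStepInduction with
  | zero => simp [hq0, hU0]
  | one =>
    have h1 := hU 0
    rw [hq1]
    simp only [Polynomial.add_comp, Polynomial.one_comp, Polynomial.X_comp]
    rw [hU 0, hU0, hU1]
    ring
  | more n ih1 ih2 =>
    have hrec := hq (n + 2) (by omega)
    simp only [show n + 2 - 1 = n + 1 from rfl, show n + 2 - 2 = n from rfl] at hrec
    rw [hrec]
    simp only [Polynomial.sub_comp, Polynomial.mul_comp, Polynomial.add_comp,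
      Polynomial.X_comp, Polynomial.ofNat_comp]
    rw [ih1, ih2]
    have hk := key (2 * n)
    rw [show 2 * (n + 2) = 2 * n + 4 from by ring, hk,
      show 2 * (n + 1) = 2 * n + 2 from by ring]
    ring
end

section
/- Define polynomials q_n ∈ ℝ[t] by q_0 = 1, q_1 = 1 + t, and q_n = (2+t)·q_{n−1} − q_{n−2} for n ≥ 2. Then for every n ≥ 1 the polynomial q_n has a real root, every real root of q_n is negative, and, writing r_n for the greatest real root of q_n: r_1 = −1, the sequence (r_n)_{n≥1} is strictly increasing (r_n < r_{n+1} for all n ≥ 1), r_n < 0 for all n ≥ 1, and r_n > −1/2 for all n ≥ 2. -/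
open Real

/-- Key identity: substituting `t = 2 cos θ - 2`, `q n` evaluates to
`cos ((n + 1/2) θ) / cos (θ/2)`. -/
theorem q_cos_identity (q : ℕ → Polynomial ℝ)
    (hq0 : q 0 = 1) (hq1 : q 1 = 1 + Polynomial.X)
    (hq : ∀ n : ℕ, 2 ≤ n → q n = (2 + Polynomial.X) * q (n - 1) - q (n - 2))
    (θ : ℝ) : ∀ n : ℕ,
    (q n).eval (2 * Real.cos θ - 2) * Real.cos (θ / 2) = Real.cos ((n + 1 / 2) * θ) := by
  intro n
  induction n using Nat.twoStepInduction with
  | zero =>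
    rw [hq0]
    norm_num
    ring_nf
  | one =>
    rw [hq1]
    simp only [Polynomial.eval_add, Polynomial.eval_one, Polynomial.eval_X]
    have h1 : ((1 : ℕ) + 1 / 2 : ℝ) * θ = 2 * (θ / 2) + θ / 2 := by push_cast; ring
    have hct : Real.cos θ = 2 * Real.cos (θ / 2) ^ 2 - 1 := by
      have h := Real.cos_two_mul (θ / 2)
      rwa [show 2 * (θ / 2) = θ from by ring] at h
    have hs : Real.sin (θ / 2) ^ 2 = 1 - Real.cos (θ / 2) ^ 2 := Real.sin_sq _
    rw [h1, Real.cos_add, Real.cos_two_mul, Real.sin_two_mul, hct]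
    linear_combination (2 * Real.cos (θ / 2)) * hs
  | more n ih1 ih2 =>
    have h := hq (n + 2) (by omega)
    simp only [Nat.add_sub_cancel, show n + 2 - 1 = n + 1 from rfl] at h
    rw [h]
    simp only [Polynomial.eval_sub, Polynomial.eval_mul, Polynomial.eval_add,
      Polynomial.eval_ofNat, Polynomial.eval_X]
    have ha : ((n : ℝ) + 2 + 1 / 2) * θ = ((n : ℝ) + 1 + 1 / 2) * θ + θ := by ring
    have hb : ((n : ℝ) + 1 / 2) * θ = ((n : ℝ) + 1 + 1 / 2) * θ - θ := by ring
    push_cast at ih1 ih2 ⊢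
    rw [ha, Real.cos_add]
    have hsub := Real.cos_sub (((n : ℝ) + 1 + 1 / 2) * θ) θ
    rw [← hb] at hsub
    linear_combination (2 * Real.cos θ) * ih2 - ih1 - hsub

/-- For nonnegative `x`, the values `q n (x)` are at least 1 and increasing in `n`. -/
theorem q_pos_of_nonneg (q : ℕ → Polynomial ℝ)
    (hq0 : q 0 = 1) (hq1 : q 1 = 1 + Polynomial.X)
    (hq : ∀ n : ℕ, 2 ≤ n → q n = (2 + Polynomial.X) * q (n - 1) - q (n - 2))
    (x : ℝ) (hx : 0 ≤ x) : ∀ n : ℕ,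
    1 ≤ (q n).eval x ∧ (q n).eval x ≤ (q (n + 1)).eval x := by
  intro n
  induction n with
  | zero =>
    rw [hq0, hq1]; simp; linarith
  | succ n ih =>
    obtain ⟨h1, h2⟩ := ih
    have h := hq (n + 2) (by omega)
    simp only [Nat.add_sub_cancel, show n + 2 - 1 = n + 1 from rfl] at h
    rw [h]
    simp only [Polynomial.eval_sub, Polynomial.eval_mul, Polynomial.eval_add,
      Polynomial.eval_ofNat, Polynomial.eval_X]
    constructor
    · nlinarith
    · nlinarith

/-- Properties of the greatest real roots `r n` of the polynomials `q n` defined by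
`q 0 = 1`, `q 1 = 1 + t`, `q n = (2 + t) q (n−1) − q (n−2)`. -/
theorem q_root_properties (q : ℕ → Polynomial ℝ)
    (hq0 : q 0 = 1) (hq1 : q 1 = 1 + Polynomial.X)
    (hq : ∀ n : ℕ, 2 ≤ n → q n = (2 + Polynomial.X) * q (n - 1) - q (n - 2)) :
    (∀ n : ℕ, 1 ≤ n → ∃ x : ℝ, (q n).eval x = 0) ∧
    (∀ n : ℕ, 1 ≤ n → ∀ x : ℝ, (q n).eval x = 0 → x < 0) ∧
    (∀ r : ℕ → ℝ,
      (∀ n : ℕ, 1 ≤ n → (q n).eval (r n) = 0 ∧ ∀ x : ℝ, (q n).eval x = 0 → x ≤ r n) →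
      r 1 = -1 ∧ (∀ n : ℕ, 1 ≤ n → r n < r (n + 1)) ∧
        (∀ n : ℕ, 1 ≤ n → r n < 0) ∧ (∀ n : ℕ, 2 ≤ n → -(1 / 2) < r n)) := by
  have key := q_cos_identity q hq0 hq1 hq
  have qpos := q_pos_of_nonneg q hq0 hq1 hq
  have pi_pos := Real.pi_pos
  -- the candidate greatest root
  set R : ℕ → ℝ := fun n => 2 * Real.cos (π / (2 * n + 1)) - 2 with hR
  -- basic bounds on θₙ = π / (2n+1)
  have hθpos : ∀ n : ℕ, (0 : ℝ) < π / (2 * n + 1) := by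
    intro n
    apply div_pos pi_pos
    positivity
  have hθle : ∀ n : ℕ, 1 ≤ n → π / (2 * n + 1) ≤ π / 3 := by
    intro n hn
    apply div_le_div_of_nonneg_left pi_pos.le (by norm_num)
    have : (1 : ℝ) ≤ (n : ℝ) := by exact_mod_cast hn
    linarith
  have hhalf : ∀ n : ℕ, ((n : ℝ) + 1 / 2) * (π / (2 * n + 1)) = π / 2 := by
    intro n
    have : (2 * (n : ℝ) + 1) ≠ 0 := by positivity
    field_simp
  -- R n is a root of q n
  have hroot : ∀ n : ℕ, 1 ≤ n → (q n).eval (R n) = 0 := by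
    intro n hn
    have h := key (π / (2 * n + 1)) n
    rw [hhalf n, Real.cos_pi_div_two, mul_eq_zero] at h
    rcases h with h | h
    · exact h
    · exfalso
      have h1 : π / (2 * n + 1) / 2 < π / 2 := by
        have := hθle n hn
        linarith
      have h2 : 0 < π / (2 * n + 1) / 2 := by linarith [hθpos n]
      have := Real.cos_pos_of_mem_Ioo (show π / (2 * n + 1) / 2 ∈ Set.Ioo (-(π/2)) (π/2) by
        constructor <;> [linarith; exact h1])
      linarith [this.ne' h]
  -- q n is positive to the right of R n
  have hnolarger : ∀ n : ℕ, 1 ≤ n → ∀ x : ℝ, R n < x → 0 < (q n).eval x := by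
    intro n hn x hx
    rcases le_or_gt 0 x with h0 | h0
    · linarith [(qpos x h0 n).1]
    · -- x ∈ (R n, 0); set θ = arccos (1 + x/2)
      set y : ℝ := 1 + x / 2 with hy
      have hcosn : Real.cos (π / (2 * n + 1)) < y := by
        simp only [hR] at hx; simp only [hy]; linarith
      have hy1 : y < 1 := by simp only [hy]; linarith
      have hym : -1 ≤ y := le_trans (Real.neg_one_le_cos _) hcosn.le
      set θ : ℝ := Real.arccos y with hθ
      have hcos : Real.cos θ = y := Real.cos_arccos hym hy1.le
      have hθ0 : 0 < θ := Real.arccos_pos.mpr hy1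
      have hθpi : θ ≤ π := Real.arccos_le_pi y
      have hθlt : θ < π / (2 * n + 1) := by
        by_contra hcon
        push_neg at hcon
        have := Real.cos_le_cos_of_nonneg_of_le_pi (hθpos n).le hθpi hcon
        rw [hcos] at this
        linarith
      have hxθ : x = 2 * Real.cos θ - 2 := by rw [hcos]; simp only [hy]; ring
      have h := key θ n
      rw [← hxθ] at h
      have hub : ((n : ℝ) + 1 / 2) * θ < π / 2 := by
        calc ((n : ℝ) + 1 / 2) * θ < ((n : ℝ) + 1 / 2) * (π / (2 * n + 1)) := by
              apply mul_lt_mul_of_pos_left hθlt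
              positivity
          _ = π / 2 := hhalf n
      have hlb : 0 < ((n : ℝ) + 1 / 2) * θ := by positivity
      have hc1 : 0 < Real.cos (((n : ℝ) + 1 / 2) * θ) := by
        apply Real.cos_pos_of_mem_Ioo
        constructor <;> [linarith; exact hub]
      have hc2 : 0 < Real.cos (θ / 2) := by
        apply Real.cos_pos_of_mem_Ioo
        have h3 := hθle n hn
        constructor
        · linarith
        · linarith
      nlinarith [h, hc1, hc2]
  -- hence r n = R n for any function picking greatest roots
  have hRmono : ∀ m k : ℕ, m < k → R m < R k := by
    intro m k hmk
    have h1 : π / (2 * k + 1) < π / (2 * m + 1) := by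
      apply div_lt_div_of_pos_left pi_pos (by positivity)
      have : (m : ℝ) < (k : ℝ) := by exact_mod_cast hmk
      linarith
    have := Real.cos_lt_cos_of_nonneg_of_le_pi (hθpos k).le
      (by
        have : π / (2 * m + 1) ≤ π / 1 := by
          apply div_le_div_of_nonneg_left pi_pos.le one_pos
          have : (0 : ℝ) ≤ (m : ℝ) := Nat.cast_nonneg m
          linarith
        simpa using this) h1
    simp only [hR]
    linarith
  have hRneg : ∀ n : ℕ, R n < 0 := by
    intro n
    have h := Real.cos_lt_cos_of_nonneg_of_le_pi le_rfl
      (by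
        have : π / (2 * n + 1) ≤ π / 1 := by
          apply div_le_div_of_nonneg_left pi_pos.le one_pos
          have : (0 : ℝ) ≤ (n : ℝ) := Nat.cast_nonneg n
          linarith
        simpa using this) (hθpos n)
    rw [Real.cos_zero] at h
    simp only [hR]
    linarith
  refine ⟨fun n hn => ⟨R n, hroot n hn⟩, ?_, ?_⟩
  · intro n hn x hx
    by_contra hcon
    push_neg at hcon
    have := (qpos x hcon n).1
    linarith
  · intro r hr
    have hreq : ∀ n : ℕ, 1 ≤ n → r n = R n := by
      intro n hn
      obtain ⟨h1, h2⟩ := hr n hn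
      have hge : R n ≤ r n := h2 _ (hroot n hn)
      rcases eq_or_lt_of_le hge with h | h
      · exact h.symm
      · exact absurd h1 (ne_of_gt (hnolarger n hn _ h))
    refine ⟨?_, ?_, ?_, ?_⟩
    · rw [hreq 1 le_rfl]
      simp only [hR]
      norm_num [Real.cos_pi_div_three]
    · intro n hn
      rw [hreq n hn, hreq (n + 1) (by omega)]
      exact hRmono n (n + 1) (by omega)
    · intro n hn
      rw [hreq n hn]
      exact hRneg n
    · intro n hn
      rw [hreq n (by omega)]
      have h5 : π / (2 * n + 1) ≤ π / 5 := by
        apply div_le_div_of_nonneg_left pi_pos.le (by norm_num)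
        have : (2 : ℝ) ≤ (n : ℝ) := by exact_mod_cast hn
        linarith
      have := Real.cos_le_cos_of_nonneg_of_le_pi (hθpos n).le
        (by linarith) h5
      have h5v : Real.cos (π / 5) = (1 + Real.sqrt 5) / 4 := Real.cos_pi_div_five
      have hsqrt : (2 : ℝ) < Real.sqrt 5 := by
        have : (2 : ℝ) = Real.sqrt 4 := by
          rw [show (4:ℝ) = 2^2 by norm_num, Real.sqrt_sq (by norm_num)]
        rw [this]
        exact Real.sqrt_lt_sqrt (by norm_num) (by norm_num)
      simp only [hR]
      rw [h5v] at this
      linarith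
end
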